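/- Let K > 0, α ∈ [0,1), and let γ : [0,∞) → [0,∞) be locally integrable with γ(t) ≥ K/(1+t)^α for all t ≥ t₀. Define Γ(t,τ) = ∫_τ^t γ(s) ds. Then there exists τ₀ ≥ t₀ such that for every τ ≥ τ₀, ∫_τ^∞ e^{-Γ(t,τ)} dt ≤ (2/K)(1+τ)^α. -/

import Mathlib

open MeasureTheory Set Filter Real

theorem exp_neg_Gamma_integral_bound
    (K α t₀ : ℝ) (hK : 0 < K) (hα0 : 0 ≤ α) (hα1 : α < 1) (ht₀ : 0 ≤ t₀)
    (γ : ℝ → ℝ) (hγnn : ∀ t ≥ (0:ℝ), 0 ≤ γ t)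
    (hγloc : LocallyIntegrableOn γ (Ici 0))
    (hγlb : ∀ t ≥ t₀, γ t ≥ K / (1 + t) ^ α) :
    ∃ τ₀ ≥ t₀, ∀ τ ≥ τ₀,
      (∫ t in Ioi τ, Real.exp (-(∫ s in τ..t, γ s))) ≤ (2 / K) * (1 + τ) ^ α := by
  have h1α : (0:ℝ) < 1 - α := by linarith
  set M : ℝ := (2 * α / K) ^ (1 / (1 - α)) with hM
  have hMnn : 0 ≤ M := Real.rpow_nonneg (by positivity) _
  refine ⟨max t₀ M, le_max_left _ _, ?_⟩
  intro τ hτ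
  have hτt₀ : t₀ ≤ τ := le_trans (le_max_left _ _) hτ
  have hτ0 : 0 ≤ τ := le_trans ht₀ hτt₀
  have hτM : M ≤ τ := le_trans (le_max_right _ _) hτ
  -- key smallness: for t ≥ τ, α * (1+t)^(α-1) ≤ K/2
  have hkey : ∀ t : ℝ, τ ≤ t → α * (1 + t) ^ (α - 1) ≤ K / 2 := by
    intro t ht
    have h1t : (0:ℝ) < 1 + t := by linarith
    rcases eq_or_lt_of_le hα0 with h | hαpos
    · rw [← h]; simp; positivity
    · have hX : 2 * α / K ≤ (1 + t) ^ (1 - α) := by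
        have hMle : M ≤ 1 + t := by linarith
        have : M ^ (1 - α) ≤ (1 + t) ^ (1 - α) :=
          Real.rpow_le_rpow hMnn hMle h1α.le
        have hMpow : M ^ (1 - α) = 2 * α / K := by
          rw [hM, ← Real.rpow_mul (by positivity), one_div,
            inv_mul_cancel₀ h1α.ne', Real.rpow_one]
        linarith [hMpow ▸ this]
      have hXpos : (0:ℝ) < (1 + t) ^ (1 - α) :=
        lt_of_lt_of_le (by positivity) hX
      have : α * (1 + t) ^ (α - 1) = α / (1 + t) ^ (1 - α) := by
        rw [show α - 1 = -(1 - α) by ring, Real.rpow_neg h1t.le, div_eq_mul_inv]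
      rw [this, div_le_iff₀ hXpos]
      calc α = K / 2 * (2 * α / K) := by field_simp
        _ ≤ K / 2 * (1 + t) ^ (1 - α) := by
            apply mul_le_mul_of_nonneg_left hX (by positivity)
  -- the comparison functions
  set c : ℝ → ℝ := fun t => K / (1 - α) * (1 + t) ^ (1 - α) with hc
  set F : ℝ → ℝ := fun t => -(2 / K) * ((1 + t) ^ α * Real.exp (c τ - c t)) with hF
  set F' : ℝ → ℝ := fun t => (2 / K) * (K - α * (1 + t) ^ (α - 1)) * Real.exp (c τ - c t)
    with hF'
  -- derivative
  have hd : ∀ t ∈ Ici τ, HasDerivAt F (F' t) t := by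
    intro t ht
    have h1t : (0:ℝ) < 1 + t := by have := ht.out; linarith
    have h1 : HasDerivAt (fun t : ℝ => 1 + t) 1 t := (hasDerivAt_id t).const_add 1
    have hpow : HasDerivAt (fun t : ℝ => (1 + t) ^ α) (1 * α * (1 + t) ^ (α - 1)) t :=
      h1.rpow_const (Or.inl h1t.ne')
    have hcder : HasDerivAt c (K / (1 - α) * (1 * (1 - α) * (1 + t) ^ (1 - α - 1))) t :=
      (h1.rpow_const (Or.inl h1t.ne')).const_mul _
    have hexp : HasDerivAt (fun t => Real.exp (c τ - c t))
        (Real.exp (c τ - c t) * -(K / (1 - α) * (1 * (1 - α) * (1 + t) ^ (1 - α - 1)))) t :=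
      (hcder.const_sub (c τ)).exp
    have := ((hpow.mul hexp).const_mul (-(2 / K)))
    convert this using 1
    · rfl
    · rfl
    · rfl
    have hprod2 : (1 + t) ^ α * (1 + t) ^ (1 - α - 1) = 1 := by
      rw [← Real.rpow_add h1t, show α + (1 - α - 1) = 0 by ring, Real.rpow_zero]
    have hKα : K / (1 - α) * (1 - α) = K := by field_simp
    simp only [hF']
    linear_combination (-(2 / K) * Real.exp (c τ - c t) * K) * hprod2 -
      (2 / K * Real.exp (c τ - c t) * (1 + t) ^ α * (1 + t) ^ (1 - α - 1)) * hKα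
  -- nonnegativity of F'
  have hpos : ∀ t ∈ Ioi τ, 0 ≤ F' t := by
    intro t ht
    have := hkey t (le_of_lt ht)
    have h2K : (0:ℝ) ≤ 2 / K := by positivity
    exact mul_nonneg (mul_nonneg h2K (by linarith)) (Real.exp_nonneg _)
  -- limit of F at infinity
  have hF0 : Tendsto F atTop (nhds 0) := by
    have hb : (0:ℝ) < K / (1 - α) := by positivity
    have h1 : Tendsto (fun t : ℝ => 1 + t) atTop atTop :=
      tendsto_atTop_add_const_left atTop 1 tendsto_id
    have h2 := (tendsto_rpow_mul_exp_neg_mul_atTop_nhds_zero (α / (1 - α)) (K / (1 - α))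
      hb).comp ((tendsto_rpow_atTop h1α).comp h1)
    have h3 := h2.const_mul (-(2 / K) * Real.exp (c τ))
    rw [mul_zero] at h3
    apply h3.congr'
    filter_upwards [eventually_ge_atTop (0:ℝ)] with t ht
    have h1t : (0:ℝ) < 1 + t := by linarith
    have hcomp : ((1 + t) ^ (1 - α)) ^ (α / (1 - α)) = (1 + t) ^ α := by
      rw [← Real.rpow_mul h1t.le]
      congr 1
      field_simp
    show -(2 / K) * Real.exp (c τ) *
        (((fun t : ℝ => 1 + t) t ^ (1 - α)) ^ (α / (1 - α)) *
          Real.exp (-(K / (1 - α)) * ((fun t : ℝ => 1 + t) t) ^ (1 - α))) = F t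
    simp only [hF, hc]
    rw [hcomp, Real.exp_sub,
      show -(K / (1 - α)) * (1 + t) ^ (1 - α) = -(K / (1 - α) * (1 + t) ^ (1 - α)) by ring,
      Real.exp_neg]
    ring
  -- integral of F'
  have hint : IntegrableOn F' (Ioi τ) :=
    integrableOn_Ioi_deriv_of_nonneg' hd hpos hF0
  have heq : ∫ t in Ioi τ, F' t = 0 - F τ :=
    integral_Ioi_of_hasDerivAt_of_nonneg' hd hpos hF0
  -- pointwise bound
  have hpt : ∀ t ∈ Ioi τ, Real.exp (-(∫ s in τ..t, γ s)) ≤ F' t := by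
    intro t ht
    have htτ : τ ≤ t := le_of_lt ht
    have h1t : (0:ℝ) < 1 + t := by linarith
    -- lower bound on the integral of γ
    have hγint : IntervalIntegrable γ volume τ t := by
      have : IntegrableOn γ (Icc τ t) volume :=
        hγloc.integrableOn_compact_subset
          (fun s hs => le_trans hτ0 hs.1) isCompact_Icc
      exact (Set.uIcc_of_le htτ ▸ this).intervalIntegrable
    have hlowcont : ContinuousOn (fun s : ℝ => K * (1 + s) ^ (-α)) (Set.uIcc τ t) := by
      apply ContinuousOn.mul continuousOn_const
      apply ContinuousOn.rpow_const
      · exact (continuous_const.add continuous_id).continuousOn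
      · intro s hs
        rw [Set.uIcc_of_le htτ] at hs
        exact Or.inl (ne_of_gt (by have := hs.1; linarith))
    have hlowint : IntervalIntegrable (fun s : ℝ => K * (1 + s) ^ (-α)) volume τ t :=
      hlowcont.intervalIntegrable
    have hmono : (∫ s in τ..t, K * (1 + s) ^ (-α)) ≤ ∫ s in τ..t, γ s := by
      apply intervalIntegral.integral_mono_on htτ hlowint hγint
      intro s hs
      have hst₀ : t₀ ≤ s := le_trans hτt₀ hs.1
      have h1s : (0:ℝ) < 1 + s := by have := hs.1; linarith
      have := hγlb s hst₀
      rw [Real.rpow_neg h1s.le, ← div_eq_mul_inv]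
      exact this
    have hcomp : (∫ s in τ..t, K * (1 + s) ^ (-α)) = c t - c τ := by
      rw [intervalIntegral.integral_const_mul]
      have : (∫ s in τ..t, (1 + s) ^ (-α)) = ∫ u in (1+τ)..(1+t), u ^ (-α) := by
        exact intervalIntegral.integral_comp_add_left (fun u => u ^ (-α)) 1
      rw [this, integral_rpow (Or.inl (by linarith : (-1:ℝ) < -α))]
      simp only [hc]
      rw [show -α + 1 = 1 - α by ring]
      field_simp
    have hΓ : c t - c τ ≤ ∫ s in τ..t, γ s := hcomp ▸ hmono
    -- conclude
    have hE : Real.exp (-(∫ s in τ..t, γ s)) ≤ Real.exp (c τ - c t) :=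
      Real.exp_le_exp.mpr (by linarith)
    have hfac : (1:ℝ) ≤ 2 / K * (K - α * (1 + t) ^ (α - 1)) := by
      have := hkey t htτ
      have : K / 2 ≤ K - α * (1 + t) ^ (α - 1) := by linarith
      calc (1:ℝ) = 2 / K * (K / 2) := by field_simp
        _ ≤ 2 / K * (K - α * (1 + t) ^ (α - 1)) := by
            apply mul_le_mul_of_nonneg_left this (by positivity)
    calc Real.exp (-(∫ s in τ..t, γ s)) ≤ Real.exp (c τ - c t) := hE
      _ = 1 * Real.exp (c τ - c t) := (one_mul _).symm
      _ ≤ 2 / K * (K - α * (1 + t) ^ (α - 1)) * Real.exp (c τ - c t) :=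
          mul_le_mul_of_nonneg_right hfac (Real.exp_nonneg _)
      _ = F' t := rfl
  -- assemble
  have hmono2 : (∫ t in Ioi τ, Real.exp (-(∫ s in τ..t, γ s))) ≤ ∫ t in Ioi τ, F' t := by
    apply integral_mono_of_nonneg
    · filter_upwards with t using Real.exp_nonneg _
    · exact hint
    · filter_upwards [ae_restrict_mem measurableSet_Ioi] with t ht using hpt t ht
  have hFτ : 0 - F τ = 2 / K * (1 + τ) ^ α := by
    simp only [hF]
    rw [sub_self, Real.exp_zero]
    ring
  calc (∫ t in Ioi τ, Real.exp (-(∫ s in τ..t, γ s))) ≤ ∫ t in Ioi τ, F' t := hmono2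
    _ = 0 - F τ := heq
    _ = 2 / K * (1 + τ) ^ α := hFτ
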